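/- The images in R of the monomials x_1^{a_1} x_2^{a_2} x_3^{a_3} x_4^{a_4} x_5^{a_5} x_6^{a_6}, where a_1, a_3, a_4, a_6 range over all nonnegative integers and a_2, a_5 range over {0, 1}, form a basis of R as a ℂ-vector space. -/

import Mathlib

open MvPolynomial

/-- The ideal of `ℂ[x₁,…,x₆]` generated by `x₂² − x₁x₃` and `x₅² − x₄x₆`
(variables are 0-indexed: `X 0 = x₁`, …, `X 5 = x₆`). -/
noncomputable def I6 : Ideal (MvPolynomial (Fin 6) ℂ) :=
  Ideal.span {X 1 ^ 2 - X 0 * X 2, X 4 ^ 2 - X 3 * X 5}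

/-- The image in `R = ℂ[x₁,…,x₆]/(x₂² − x₁x₃, x₅² − x₄x₆)` of the monomial
`x₁^{a₁} x₂^{a₂} x₃^{a₃} x₄^{a₄} x₅^{a₅} x₆^{a₆}`, where `a₁, a₃, a₄, a₆ ∈ ℕ`
and `a₂, a₅ ∈ {0, 1}` (the index is `(a₁, a₂, a₃, a₄, a₅, a₆)`). -/
noncomputable def stdMonomial (a : ℕ × Fin 2 × ℕ × ℕ × Fin 2 × ℕ) :
    MvPolynomial (Fin 6) ℂ ⧸ I6 :=
  Ideal.Quotient.mk I6
    (X 0 ^ a.1 * X 1 ^ (a.2.1 : ℕ) * X 2 ^ a.2.2.1 * X 3 ^ a.2.2.2.1 *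
      X 4 ^ (a.2.2.2.2.1 : ℕ) * X 5 ^ a.2.2.2.2.2)

namespace Stmt10Aux

noncomputable section

/-- Base ring `ℂ[x₁, x₃, x₄, x₆]` (variables `0,1,2,3` respectively). -/
abbrev S : Type := MvPolynomial (Fin 4) ℂ

def f : Polynomial S := Polynomial.X ^ 2 - Polynomial.C (X 0 * X 1)

lemma hf : f.Monic := Polynomial.monic_X_pow_sub_C _ two_ne_zero

lemma hf_deg : f.natDegree = 2 := Polynomial.natDegree_X_pow_sub_C

abbrev A : Type := AdjoinRoot f

instance : Nontrivial A :=
  AdjoinRoot.nontrivial f (by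
    rw [f, Polynomial.degree_X_pow_sub_C (by norm_num : 0 < 2)]
    decide)

def g : Polynomial A :=
  Polynomial.X ^ 2 - Polynomial.C (algebraMap S A (X 2 * X 3))

lemma hg : g.Monic := Polynomial.monic_X_pow_sub_C _ two_ne_zero

lemma hg_deg : g.natDegree = 2 := Polynomial.natDegree_X_pow_sub_C

abbrev B : Type := AdjoinRoot g

lemma rootf_sq : (AdjoinRoot.root f) ^ 2 = algebraMap S A (X 0 * X 1) := by
  have h := AdjoinRoot.eval₂_root f
  conv at h => lhs; arg 3; rw [f]
  simp only [ Polynomial.eval₂_sub, Polynomial.eval₂_pow, Polynomial.eval₂_X,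
    Polynomial.eval₂_C, sub_eq_zero] at h
  simpa [AdjoinRoot.algebraMap_eq] using h

lemma rootg_sq : (AdjoinRoot.root g) ^ 2 = algebraMap A B (algebraMap S A (X 2 * X 3)) := by
  have h := AdjoinRoot.eval₂_root g
  conv at h => lhs; arg 3; rw [g]
  simp only [ Polynomial.eval₂_sub, Polynomial.eval₂_pow, Polynomial.eval₂_X,
    Polynomial.eval₂_C, sub_eq_zero] at h
  simpa [AdjoinRoot.algebraMap_eq] using h

/-- Target values of the six variables in `B`. -/
def v : Fin 6 → B :=
  ![algebraMap S B (X 0), algebraMap A B (AdjoinRoot.root f), algebraMap S B (X 1),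
    algebraMap S B (X 2), AdjoinRoot.root g, algebraMap S B (X 3)]

def φ : MvPolynomial (Fin 6) ℂ →ₐ[ℂ] B := aeval v

lemma v0 : v 0 = algebraMap S B (X 0) := rfl
lemma v1 : v 1 = algebraMap A B (AdjoinRoot.root f) := rfl
lemma v2 : v 2 = algebraMap S B (X 1) := rfl
lemma v3 : v 3 = algebraMap S B (X 2) := rfl
lemma v4 : v 4 = AdjoinRoot.root g := rfl
lemma v5 : v 5 = algebraMap S B (X 3) := rfl

lemma φ_ker : I6 ≤ RingHom.ker φ := by
  rw [I6, Ideal.span_le]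
  rintro p (rfl | rfl)
  · simp only [SetLike.mem_coe, RingHom.mem_ker, map_sub, map_mul, map_pow, φ, aeval_X,
      v0, v1, v2]
    rw [← map_pow, rootf_sq, ← map_mul, ← IsScalarTower.algebraMap_apply S A B, map_mul,
      sub_self]
  · simp only [SetLike.mem_coe, RingHom.mem_ker, map_sub, map_mul, map_pow, φ, aeval_X,
      v3, v4, v5]
    rw [rootg_sq, ← map_mul, ← IsScalarTower.algebraMap_apply S A B, map_mul, sub_self]

def Φ : (MvPolynomial (Fin 6) ℂ ⧸ I6) →ₐ[ℂ] B :=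
  Ideal.Quotient.liftₐ I6 φ fun a ha => φ_ker ha

lemma Φ_mk (p : MvPolynomial (Fin 6) ℂ) : Φ (Ideal.Quotient.mk I6 p) = φ p := rfl

/-- The basis of `A` over `ℂ`. -/
def bA : Module.Basis ((Fin 4 →₀ ℕ) × Fin f.natDegree) ℂ A :=
  (basisMonomials (Fin 4) ℂ).smulTower (AdjoinRoot.powerBasis' hf).basis

/-- The basis of `B` over `ℂ`. -/
def bB : Module.Basis (((Fin 4 →₀ ℕ) × Fin f.natDegree) × Fin g.natDegree) ℂ B :=
  bA.smulTower (AdjoinRoot.powerBasis' hg).basis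

/-- Index embedding. -/
def e (a : ℕ × Fin 2 × ℕ × ℕ × Fin 2 × ℕ) :
    ((Fin 4 →₀ ℕ) × Fin f.natDegree) × Fin g.natDegree :=
  ((Finsupp.single 0 a.1 + Finsupp.single 1 a.2.2.1 + Finsupp.single 2 a.2.2.2.1 +
      Finsupp.single 3 a.2.2.2.2.2, Fin.cast hf_deg.symm a.2.1),
    Fin.cast hg_deg.symm a.2.2.2.2.1)

lemma e_inj : Function.Injective e := by
  rintro ⟨a1, a2, a3, a4, a5, a6⟩ ⟨b1, b2, b3, b4, b5, b6⟩ h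
  simp only [e, Prod.mk.injEq] at h
  obtain ⟨⟨hm, h2⟩, h5⟩ := h
  have e0 := DFunLike.congr_fun hm (0 : Fin 4)
  have e1 := DFunLike.congr_fun hm (1 : Fin 4)
  have e2 := DFunLike.congr_fun hm (2 : Fin 4)
  have e3 := DFunLike.congr_fun hm (3 : Fin 4)
  simp only [Finsupp.add_apply, Finsupp.single_apply] at e0 e1 e2 e3
  norm_num at e0 e1 e2 e3
  have h2' : a2 = b2 := Fin.ext (by simpa using congrArg Fin.val h2)
  have h5' : a5 = b5 := Fin.ext (by simpa using congrArg Fin.val h5)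
  simp_all

lemma monomial_singles (a1 a3 a4 a6 : ℕ) :
    (monomial (Finsupp.single 0 a1 + Finsupp.single 1 a3 + Finsupp.single 2 a4 +
        Finsupp.single 3 a6) (1 : ℂ) : S) =
      X 0 ^ a1 * X 1 ^ a3 * X 2 ^ a4 * X 3 ^ a6 := by
  simp only [X_pow_eq_monomial, monomial_mul, one_mul]

lemma pbf_basis (i : Fin f.natDegree) :
    (AdjoinRoot.powerBasis' hf).basis i = AdjoinRoot.root f ^ (i : ℕ) := by
  erw [PowerBasis.basis_eq_pow, AdjoinRoot.powerBasis'_gen]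

lemma pbg_basis (i : Fin g.natDegree) :
    (AdjoinRoot.powerBasis' hg).basis i = AdjoinRoot.root g ^ (i : ℕ) := by
  erw [PowerBasis.basis_eq_pow, AdjoinRoot.powerBasis'_gen]

lemma Φ_stdMonomial (a : ℕ × Fin 2 × ℕ × ℕ × Fin 2 × ℕ) :
    Φ (stdMonomial a) = bB (e a) := by
  obtain ⟨a1, a2, a3, a4, a5, a6⟩ := a
  rw [stdMonomial, Φ_mk]
  simp only [φ, map_mul, map_pow, aeval_X, v0, v1, v2, v3, v4, v5]
  erw [bB, Module.Basis.smulTower_apply, bA, Module.Basis.smulTower_apply]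
  erw [pbf_basis, pbg_basis]
  simp only [e, coe_basisMonomials, Fin.coe_cast, Algebra.smul_def, map_mul, map_pow,
    monomial_singles, ← IsScalarTower.algebraMap_apply S A B]
  ring

lemma indep : LinearIndependent ℂ stdMonomial := by
  have h1 : LinearIndependent ℂ (⇑bB ∘ e) :=
    bB.linearIndependent.comp e e_inj
  have h2 : ⇑Φ.toLinearMap ∘ stdMonomial = ⇑bB ∘ e := by
    funext a; exact Φ_stdMonomial a
  exact LinearIndependent.of_comp Φ.toLinearMap (h2 ▸ h1)

/-- The span of the standard monomials. -/
def T : Submodule ℂ (MvPolynomial (Fin 6) ℂ ⧸ I6) :=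
  Submodule.span ℂ (Set.range stdMonomial)

lemma mem_span5 (a5 : ℕ) :
    ∀ a1 a2 a3 a4 a6 : ℕ, a2 < 2 →
      Ideal.Quotient.mk I6
        (X 0 ^ a1 * X 1 ^ a2 * X 2 ^ a3 * X 3 ^ a4 * X 4 ^ a5 * X 5 ^ a6) ∈ T := by
  induction a5 using Nat.strong_induction_on with
  | _ a5 ih =>
    intro a1 a2 a3 a4 a6 h2
    rcases lt_or_ge a5 2 with h5 | h5
    · exact Submodule.subset_span ⟨(a1, ⟨a2, h2⟩, a3, a4, ⟨a5, h5⟩, a6), rfl⟩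
    · obtain ⟨b5, rfl⟩ : ∃ b5, a5 = b5 + 2 := ⟨a5 - 2, by omega⟩
      have key : Ideal.Quotient.mk I6
            (X 0 ^ a1 * X 1 ^ a2 * X 2 ^ a3 * X 3 ^ a4 * X 4 ^ (b5 + 2) * X 5 ^ a6) =
          Ideal.Quotient.mk I6
            (X 0 ^ a1 * X 1 ^ a2 * X 2 ^ a3 * X 3 ^ (a4 + 1) * X 4 ^ b5 * X 5 ^ (a6 + 1)) := by
        rw [Ideal.Quotient.eq]
        have hid : (X 0 ^ a1 * X 1 ^ a2 * X 2 ^ a3 * X 3 ^ a4 * X 4 ^ (b5 + 2) * X 5 ^ a6 -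
            X 0 ^ a1 * X 1 ^ a2 * X 2 ^ a3 * X 3 ^ (a4 + 1) * X 4 ^ b5 * X 5 ^ (a6 + 1)
            : MvPolynomial (Fin 6) ℂ) =
            (X 0 ^ a1 * X 1 ^ a2 * X 2 ^ a3 * X 3 ^ a4 * X 4 ^ b5 * X 5 ^ a6) *
              (X 4 ^ 2 - X 3 * X 5) := by ring
        rw [hid]
        exact Ideal.mul_mem_left _ _ (Ideal.subset_span (by simp [I6]))
      rw [key]
      exact ih b5 (by omega) a1 a2 a3 (a4 + 1) (a6 + 1) h2

lemma mem_span2 (a2 : ℕ) :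
    ∀ a1 a3 a4 a5 a6 : ℕ,
      Ideal.Quotient.mk I6
        (X 0 ^ a1 * X 1 ^ a2 * X 2 ^ a3 * X 3 ^ a4 * X 4 ^ a5 * X 5 ^ a6) ∈ T := by
  induction a2 using Nat.strong_induction_on with
  | _ a2 ih =>
    intro a1 a3 a4 a5 a6
    rcases lt_or_ge a2 2 with h2 | h2
    · exact mem_span5 a5 a1 a2 a3 a4 a6 h2
    · obtain ⟨b2, rfl⟩ : ∃ b2, a2 = b2 + 2 := ⟨a2 - 2, by omega⟩
      have key : Ideal.Quotient.mk I6
            (X 0 ^ a1 * X 1 ^ (b2 + 2) * X 2 ^ a3 * X 3 ^ a4 * X 4 ^ a5 * X 5 ^ a6) =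
          Ideal.Quotient.mk I6
            (X 0 ^ (a1 + 1) * X 1 ^ b2 * X 2 ^ (a3 + 1) * X 3 ^ a4 * X 4 ^ a5 * X 5 ^ a6) := by
        rw [Ideal.Quotient.eq]
        have hid : (X 0 ^ a1 * X 1 ^ (b2 + 2) * X 2 ^ a3 * X 3 ^ a4 * X 4 ^ a5 * X 5 ^ a6 -
            X 0 ^ (a1 + 1) * X 1 ^ b2 * X 2 ^ (a3 + 1) * X 3 ^ a4 * X 4 ^ a5 * X 5 ^ a6
            : MvPolynomial (Fin 6) ℂ) =
            (X 0 ^ a1 * X 1 ^ b2 * X 2 ^ a3 * X 3 ^ a4 * X 4 ^ a5 * X 5 ^ a6) *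
              (X 1 ^ 2 - X 0 * X 2) := by ring
        rw [hid]
        exact Ideal.mul_mem_left _ _ (Ideal.subset_span (by simp [I6]))
      rw [key]
      exact ih b2 (by omega) (a1 + 1) (a3 + 1) a4 a5 a6

lemma monomial_mem (m : Fin 6 →₀ ℕ) (c : ℂ) :
    Ideal.Quotient.mk I6 (monomial m c) ∈ T := by
  have hm : (monomial m c : MvPolynomial (Fin 6) ℂ) =
      c • (X 0 ^ m 0 * X 1 ^ m 1 * X 2 ^ m 2 * X 3 ^ m 3 * X 4 ^ m 4 * X 5 ^ m 5) := by
    have hmeq : m = Finsupp.single 0 (m 0) + Finsupp.single 1 (m 1) + Finsupp.single 2 (m 2) +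
        Finsupp.single 3 (m 3) + Finsupp.single 4 (m 4) + Finsupp.single 5 (m 5) := by
      ext i
      fin_cases i <;> simp (config := { decide := true }) [Finsupp.single_apply]
    rw [MvPolynomial.smul_eq_C_mul]
    calc (monomial m c : MvPolynomial (Fin 6) ℂ) = C c * monomial m 1 := by
          rw [C_mul_monomial, mul_one]
      _ = _ := by
          conv_lhs => rw [hmeq]
          simp only [X_pow_eq_monomial, monomial_mul, one_mul]
  rw [hm, MvPolynomial.smul_eq_C_mul, map_mul]
  have hC : (Ideal.Quotient.mk I6) (C c) = algebraMap ℂ (MvPolynomial (Fin 6) ℂ ⧸ I6) c := rfl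
  rw [hC, ← Algebra.smul_def]
  exact Submodule.smul_mem _ _ (mem_span2 (m 1) (m 0) (m 2) (m 3) (m 4) (m 5))

lemma spans : Submodule.span ℂ (Set.range stdMonomial) = ⊤ := by
  rw [Submodule.eq_top_iff']
  intro x
  obtain ⟨p, rfl⟩ := Ideal.Quotient.mk_surjective x
  rw [MvPolynomial.as_sum p, map_sum]
  exact Submodule.sum_mem _ fun m _ => monomial_mem m (coeff m p)

end

end Stmt10Aux

/-- those monomial classes form a ℂ-vector space basis of `R`. -/
theorem stmt_10 :
    LinearIndependent ℂ stdMonomial ∧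
    Submodule.span ℂ (Set.range stdMonomial) = ⊤ := by
  exact ⟨Stmt10Aux.indep, Stmt10Aux.spans⟩
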